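/- Let A be a synaptic algebra and let a ∈ A and λ ∈ ℝ. Then: (i) p_{−a,λ} = 1 − p_{a,−λ} + d_{a,−λ}, where d_{a,μ} := 1 − (a − μ)° is the μ-eigenprojection of a; (ii) p_{−a,λ} = 1 − ⋁_{μ∈ℝ, μ<−λ} p_{a,μ}; (iii) p_{1−a,λ} = 1 − ⋁_{μ∈ℝ, μ<1−λ} p_{a,μ}. -/

import Mathlib

open Filter Topology

/-- The order-unit norm associated with an order relation `le` on a real algebra:
`‖a‖ = inf {λ > 0 : −λ ≤ a ≤ λ}`. -/
noncomputable def ouNorm {R : Type*} [Ring R] [Algebra ℝ R] (le : R → R → Prop) (a : R) : ℝ :=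
  sInf {l : ℝ | 0 < l ∧ le (algebraMap ℝ R (-l)) a ∧ le a (algebraMap ℝ R l)}

/-- A synaptic algebra: a real linear subspace `A` (containing `1`) of a unital associative
algebra `R` over `ℝ` (a complex algebra is in particular a real algebra), equipped with a
partial order making it an Archimedean partially ordered real linear space with order unit `1`,
and satisfying axioms SA1–SA8.  The square root (SA5) and the carrier (SA6) are bundled as
data together with their defining properties. -/
structure SynapticAlgebra (R : Type*) [Ring R] [Algebra ℝ R] where
  A : Submodule ℝ R
  one_mem : (1 : R) ∈ A
  /-- the synaptic order (meaningful on elements of `A`) -/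
  le : R → R → Prop
  -- SA1 : Archimedean partially ordered real linear space with order unit 1
  le_refl : ∀ a ∈ A, le a a
  le_antisymm : ∀ a ∈ A, ∀ b ∈ A, le a b → le b a → a = b
  le_trans : ∀ a ∈ A, ∀ b ∈ A, ∀ c ∈ A, le a b → le b c → le a c
  add_le_add_right : ∀ a ∈ A, ∀ b ∈ A, ∀ c ∈ A, le a b → le (a + c) (b + c)
  smul_nonneg : ∀ r : ℝ, 0 ≤ r → ∀ a ∈ A, le 0 a → le 0 (r • a)
  arch : ∀ a ∈ A, ∀ b ∈ A, (∀ n : ℕ, le ((n : ℝ) • a) b) → le a 0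
  one_order_unit : ∀ a ∈ A, ∃ n : ℕ, le a ((n : ℝ) • (1 : R))
  zero_ne_one : (0 : R) ≠ 1
  -- SA2
  sq_mem : ∀ a ∈ A, a * a ∈ A
  sq_nn : ∀ a ∈ A, le 0 (a * a)
  -- SA3
  quad_mem : ∀ a ∈ A, ∀ b ∈ A, a * b * a ∈ A
  quad_nn : ∀ a ∈ A, ∀ b ∈ A, le 0 a → le 0 b → le 0 (a * b * a)
  -- SA4
  quad_zero : ∀ a ∈ A, ∀ b ∈ A, le 0 b → a * b * a = 0 → a * b = 0 ∧ b * a = 0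
  -- SA5 : square roots
  sqrt : R → R
  sqrt_mem : ∀ a ∈ A, le 0 a → sqrt a ∈ A
  sqrt_nn : ∀ a ∈ A, le 0 a → le 0 (sqrt a)
  sqrt_sq : ∀ a ∈ A, le 0 a → sqrt a * sqrt a = a
  sqrt_bicomm : ∀ a ∈ A, le 0 a → ∀ b ∈ A, a * b = b * a → sqrt a * b = b * sqrt a
  sqrt_unique : ∀ a ∈ A, le 0 a → ∀ b ∈ A, le 0 b → b * b = a →
    (∀ c ∈ A, a * c = c * a → b * c = c * b) → b = sqrt a
  -- SA6 : carriers
  carr : R → R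
  carr_mem : ∀ a ∈ A, carr a ∈ A
  carr_idem : ∀ a ∈ A, carr a * carr a = carr a
  carr_spec : ∀ a ∈ A, ∀ b ∈ A, (a * b = 0 ↔ carr a * b = 0)
  -- SA7
  inv_exists : ∀ a ∈ A, le 1 a → ∃ b ∈ A, a * b = 1 ∧ b * a = 1
  -- SA8
  comm_closed : ∀ a ∈ A, ∀ b ∈ A, ∀ f : ℕ → R, (∀ n, f n ∈ A) →
    (∀ n, le (f n) (f (n + 1))) → (∀ m n, f m * f n = f n * f m) →
    (∀ n, f n * b = b * f n) →
    Filter.Tendsto (fun n => ouNorm le (a - f n)) Filter.atTop (nhds 0) →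
    a * b = b * a

namespace SynapticAlgebra

variable {R : Type*} [Ring R] [Algebra ℝ R] (S : SynapticAlgebra R)

/-- `|a| := (a²)^{1/2}`. -/
def absval (a : R) : R := S.sqrt (a * a)

/-- The positive part `a⁺ := (|a| + a)/2`. -/
noncomputable def pospart (a : R) : R := (2⁻¹ : ℝ) • (S.absval a + a)

/-- The spectral resolution `p_{a,λ} := 1 − ((a − λ)⁺)°`. -/
noncomputable def specProj (a : R) (l : ℝ) : R :=
  1 - S.carr (S.pospart (a - algebraMap ℝ R l))

/-- The spectral order: `a ≤ₛ b` iff `p_{b,λ} ≤ p_{a,λ}` for all real `λ`. -/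
noncomputable def specLE (a b : R) : Prop :=
  ∀ l : ℝ, S.le (S.specProj b l) (S.specProj a l)

/-- Projections of the synaptic algebra. -/
def IsProj (p : R) : Prop := p ∈ S.A ∧ p * p = p

/-- The set `E = {e ∈ A : 0 ≤ e ≤ 1}` of effects. -/
def effects : Set R := {e | e ∈ S.A ∧ S.le 0 e ∧ S.le e 1}

/-- `p` is the infimum of the set `T` in the orthomodular lattice `P` of projections. -/
def IsProjInf (p : R) (T : Set R) : Prop :=
  S.IsProj p ∧ (∀ q ∈ T, S.le p q) ∧ ∀ r, S.IsProj r → (∀ q ∈ T, S.le r q) → S.le r p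

/-- `p` is the supremum of the set `T` in the orthomodular lattice `P` of projections. -/
def IsProjSup (p : R) (T : Set R) : Prop :=
  S.IsProj p ∧ (∀ q ∈ T, S.le q p) ∧ ∀ r, S.IsProj r → (∀ q ∈ T, S.le q r) → S.le p r

/-- A Banach (norm-complete) synaptic algebra: every Cauchy sequence in `A`
(w.r.t. the order-unit norm) converges in norm to an element of `A`. -/
noncomputable def IsBanach : Prop :=
  ∀ f : ℕ → R, (∀ n, f n ∈ S.A) →
    (∀ ε : ℝ, 0 < ε → ∃ N : ℕ, ∀ m ≥ N, ∀ n ≥ N, ouNorm S.le (f m - f n) < ε) →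
    ∃ a ∈ S.A, Filter.Tendsto (fun n => ouNorm S.le (a - f n)) Filter.atTop (nhds 0)

/-- The `λ`-eigenprojection `d_{a,λ} := 1 − (a − λ)°`. -/
noncomputable def eigenProj (a : R) (l : ℝ) : R := 1 - S.carr (a - algebraMap ℝ R l)

/-- The bicommutant `CC(a)` (within `A`). -/
def Bicomm (a : R) : Set R :=
  {b | b ∈ S.A ∧ ∀ c ∈ S.A, a * c = c * a → b * c = c * b}

/-- Projections `p` and `q` are exchanged by a symmetry (`s² = 1`, `sps = q`). -/
def ExchBySymm (p q : R) : Prop := ∃ s ∈ S.A, s * s = 1 ∧ s * p * s = q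

/-- The dimension equivalence on projections: a finite chain of projections, consecutive
ones exchanged by symmetries. -/
def DimEquiv (p q : R) : Prop :=
  ∃ (n : ℕ) (c : ℕ → R), c 0 = p ∧ c n = q ∧ (∀ i ≤ n, S.IsProj (c i)) ∧
    ∀ i < n, S.ExchBySymm (c i) (c (i + 1))

/-- `A` is of finite type iff every projection is finite. -/
def FiniteType : Prop :=
  ∀ p, S.IsProj p → ∀ q, S.IsProj q → S.DimEquiv q p → S.le q p → q = p

/-- The projection lattice `P` is a complete orthomodular lattice: every set of projections
has an infimum and a supremum in `P`. -/
def ProjComplete : Prop :=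
  ∀ T : Set R, (∀ p ∈ T, S.IsProj p) →
    (∃ q, S.IsProjInf q T) ∧ (∃ q, S.IsProjSup q T)

/-- A bounded resolution of identity with bound `K`. -/
def IsBoundedResId (p : ℝ → R) (K : ℝ) : Prop :=
  0 ≤ K ∧ (∀ l, S.IsProj (p l)) ∧
  (∀ l, l < -K → p l = 0) ∧ (∀ l, K ≤ l → p l = 1) ∧
  (∀ l l', l ≤ l' → S.le (p l) (p l')) ∧
  (∀ l, S.IsProjInf (p l) {x | ∃ l' > l, x = p l'})

end SynapticAlgebra

/-- `c` is a regular involution on the subset `T` of the poset `(T, le')`. -/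
def IsRegInvPoset {R : Type*} (le' : R → R → Prop) (T : Set R) (c : R → R) : Prop :=
  (∀ a ∈ T, c a ∈ T) ∧ (∀ a ∈ T, c (c a) = a) ∧
  (∀ a ∈ T, ∀ b ∈ T, le' a b → le' (c b) (c a)) ∧
  (∀ a ∈ T, ∀ b ∈ T, le' a (c a) → le' b (c b) → le' a (c b))

/-- `(T, le', c, 0, 1)` is a Kleene poset: a bounded poset with a regular involution. -/
def IsKleene {R : Type*} [Zero R] [One R] (le' : R → R → Prop) (T : Set R) (c : R → R) : Prop :=
  IsRegInvPoset le' T c ∧ (0 : R) ∈ T ∧ (1 : R) ∈ T ∧ ∀ a ∈ T, le' 0 a ∧ le' a 1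

/-- Every pair of elements of `T` has an infimum and a supremum in `(T, le')`. -/
def HasBinSupInf {R : Type*} (le' : R → R → Prop) (T : Set R) : Prop :=
  ∀ a ∈ T, ∀ b ∈ T,
    (∃ m ∈ T, le' m a ∧ le' m b ∧ ∀ x ∈ T, le' x a → le' x b → le' x m) ∧
    (∃ j ∈ T, le' a j ∧ le' b j ∧ ∀ x ∈ T, le' a x → le' b x → le' j x)

section Aux

namespace SynapticAlgebra

variable {R : Type*} [Ring R] [Algebra ℝ R] (S : SynapticAlgebra R)

/-- translation: `a ≤ b ↔ 0 ≤ b - a`. -/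
lemma le_iff_sub {a b : R} (ha : a ∈ S.A) (hb : b ∈ S.A) :
    S.le a b ↔ S.le 0 (b - a) := by
  constructor
  · intro h
    have := S.add_le_add_right a ha b hb (-a) (S.A.neg_mem ha) h
    simpa [sub_eq_add_neg] using this
  · intro h
    have := S.add_le_add_right 0 S.A.zero_mem (b - a) (S.A.sub_mem hb ha) a ha h
    simpa using this

lemma le_tr {a b c : R} (ha : a ∈ S.A) (hb : b ∈ S.A) (hc : c ∈ S.A)
    (h1 : S.le a b) (h2 : S.le b c) : S.le a c :=
  S.le_trans a ha b hb c hc h1 h2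

lemma add_nn {a b : R} (ha : a ∈ S.A) (hb : b ∈ S.A)
    (h1 : S.le 0 a) (h2 : S.le 0 b) : S.le 0 (a + b) := by
  have h3 := S.add_le_add_right 0 S.A.zero_mem b hb a ha h2
  rw [zero_add] at h3
  have h4 := S.le_tr S.A.zero_mem ha (S.A.add_mem hb ha) h1 h3
  rwa [add_comm] at h4

lemma zero_le_one' : S.le 0 (1 : R) := by
  have := S.sq_nn 1 S.one_mem; simpa using this

lemma le_nn_antisymm {a : R} (ha : a ∈ S.A) (h1 : S.le 0 a) (h2 : S.le a 0) : a = 0 :=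
  S.le_antisymm a ha 0 S.A.zero_mem h2 h1

/-- Archimedean property: if `a ≤ t·1` for all `t > 0` then `a ≤ 0`. -/
lemma le_zero_of_forall {a : R} (ha : a ∈ S.A)
    (h : ∀ t : ℝ, 0 < t → S.le a (t • (1 : R))) : S.le a 0 := by
  apply S.arch a ha 1 S.one_mem
  intro n
  rcases Nat.eq_zero_or_pos n with hn | hn
  · subst hn; simpa using S.zero_le_one'
  · have hpos : (0:ℝ) < 1 / n := by positivity
    have h1 := h _ hpos
    rw [S.le_iff_sub ha (S.A.smul_mem _ S.one_mem)] at h1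
    have h2 := S.smul_nonneg (n : ℝ) (by positivity) _
      (S.A.sub_mem (S.A.smul_mem _ S.one_mem) ha) h1
    rw [S.le_iff_sub (S.A.smul_mem _ ha) S.one_mem]
    have : (n:ℝ) • ((1 / (n:ℝ)) • (1:R) - a) = (1:R) - (n:ℝ) • a := by
      rw [smul_sub, smul_smul]
      congr 1
      rw [mul_one_div, div_self (by positivity), one_smul]
    rwa [this] at h2

lemma smul_le_smul {a b : R} (ha : a ∈ S.A) (hb : b ∈ S.A) {r : ℝ} (hr : 0 ≤ r)
    (h : S.le a b) : S.le (r • a) (r • b) := by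
  rw [S.le_iff_sub ha hb] at h
  rw [S.le_iff_sub (S.A.smul_mem _ ha) (S.A.smul_mem _ hb), ← smul_sub]
  exact S.smul_nonneg r hr _ (S.A.sub_mem hb ha) h

/-- `x² = 0 → x = 0`. -/
lemma eq_zero_of_sq {x : R} (hx : x ∈ S.A) (h : x * x = 0) : x = 0 := by
  have key : ∀ y : R, y ∈ S.A → y * y = 0 → S.le y 0 := by
    intro y hy hyy
    apply S.le_zero_of_forall hy
    intro t ht
    have hsq := S.sq_nn (y - t • 1) (S.A.sub_mem hy (S.A.smul_mem _ S.one_mem))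
    have hexp : (y - t • (1:R)) * (y - t • 1) = (t * t) • (1:R) - (2 * t) • y := by
      simp only [sub_mul, mul_sub, smul_mul_assoc, mul_smul_comm, smul_smul, hyy,
        one_mul, mul_one]
      module
    rw [hexp] at hsq
    have h2 := S.smul_nonneg (1 / (2 * t)) (by positivity) _
      (S.A.sub_mem (S.A.smul_mem _ S.one_mem) (S.A.smul_mem _ hy)) hsq
    have : (1 / (2 * t)) • ((t * t) • (1:R) - (2 * t) • y) = (t/2) • (1:R) - y := by
      rw [smul_sub, smul_smul, smul_smul]
      congr 2
      · field_simp
      · field_simp; rw [one_smul]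
    rw [this] at h2
    have h3 : S.le y ((t/2) • (1:R)) := by
      rw [S.le_iff_sub hy (S.A.smul_mem _ S.one_mem)]; exact h2
    have h4 : S.le ((t/2) • (1:R)) (t • (1:R)) := by
      rw [S.le_iff_sub (S.A.smul_mem _ S.one_mem) (S.A.smul_mem _ S.one_mem), ← sub_smul]
      exact S.smul_nonneg _ (by linarith) _ S.one_mem S.zero_le_one'
    exact S.le_tr hy (S.A.smul_mem _ S.one_mem) (S.A.smul_mem _ S.one_mem) h3 h4
  have h1 := key x hx h
  have h2 := key (-x) (S.A.neg_mem hx) (by simpa using h)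
  have h3 : S.le 0 x := by
    have := S.add_le_add_right (-x) (S.A.neg_mem hx) 0 S.A.zero_mem x hx h2
    simpa using this
  exact S.le_nn_antisymm hx h3 h1

/-- `xy = 0 → yx = 0`. -/
lemma swap0 {x y : R} (hx : x ∈ S.A) (hy : y ∈ S.A) (h : x * y = 0) : y * x = 0 := by
  have h1 : y * (x * x) * y = 0 := by
    rw [mul_assoc, mul_assoc, h, mul_zero, mul_zero]
  obtain ⟨h2, h3⟩ := S.quad_zero y hy (x * x) (S.sq_mem x hx) (S.sq_nn x hx) h1
  have hyx : y * x ∈ S.A := by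
    have : y * x = (y + x) * (y + x) - y * y - x * x := by
      rw [add_mul, mul_add, mul_add, h]; abel
    rw [this]
    exact S.A.sub_mem (S.A.sub_mem (S.sq_mem _ (S.A.add_mem hy hx)) (S.sq_mem _ hy)) (S.sq_mem _ hx)
  apply S.eq_zero_of_sq hyx
  rw [mul_assoc, ← mul_assoc x y x, h, zero_mul, mul_zero]

end SynapticAlgebra

end Aux
section Aux2

namespace SynapticAlgebra

variable {R : Type*} [Ring R] [Algebra ℝ R] (S : SynapticAlgebra R)

lemma mul_carr {a : R} (ha : a ∈ S.A) : a * S.carr a = a := by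
  have h0 : S.carr a * (1 - S.carr a) = 0 := by
    rw [mul_sub, mul_one, S.carr_idem a ha, sub_self]
  have h1 := (S.carr_spec a ha (1 - S.carr a)
    (S.A.sub_mem S.one_mem (S.carr_mem a ha))).mpr h0
  linear_combination (norm := noncomm_ring) -h1

lemma carr_mul {a : R} (ha : a ∈ S.A) : S.carr a * a = a := by
  have h1 : a * (1 - S.carr a) = 0 := by
    rw [mul_sub, mul_one, S.mul_carr ha, sub_self]
  have h2 := S.swap0 ha (S.A.sub_mem S.one_mem (S.carr_mem a ha)) h1
  linear_combination (norm := noncomm_ring) -h2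

lemma carr_kills {a b : R} (ha : a ∈ S.A) (hb : b ∈ S.A) (h : a * b = 0) :
    S.carr a * b = 0 := (S.carr_spec a ha b hb).mp h

lemma kills_carr {a b : R} (ha : a ∈ S.A) (hb : b ∈ S.A) (h : b * a = 0) :
    b * S.carr a = 0 := by
  have h1 := S.swap0 hb ha h
  have h2 := S.carr_kills ha hb h1
  exact S.swap0 (S.carr_mem a ha) hb h2

lemma proj_nonneg {p : R} (hp : p ∈ S.A) (hpp : p * p = p) : S.le 0 p := by
  have := S.sq_nn p hp; rwa [hpp] at this

omit [Algebra ℝ R] in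
lemma one_sub_proj {p : R} (hpp : p * p = p) : (1 - p) * (1 - p) = 1 - p := by
  linear_combination (norm := noncomm_ring) hpp

lemma proj_le_one {p : R} (hp : p ∈ S.A) (hpp : p * p = p) : S.le p 1 := by
  rw [S.le_iff_sub hp S.one_mem]
  exact S.proj_nonneg (S.A.sub_mem S.one_mem hp) (one_sub_proj hpp)

lemma quad_le {a x y : R} (hamem : a ∈ S.A) (hx : x ∈ S.A) (hy : y ∈ S.A)
    (hann : S.le 0 a) (hxy : S.le x y) : S.le (a * x * a) (a * y * a) := by
  rw [S.le_iff_sub hx hy] at hxy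
  rw [S.le_iff_sub (S.quad_mem a hamem x hx) (S.quad_mem a hamem y hy)]
  have h1 := S.quad_nn a hamem (y - x) (S.A.sub_mem hy hx) hann hxy
  have h2 : a * (y - x) * a = a * y * a - a * x * a := by noncomm_ring
  rwa [h2] at h1

/-- For projections, `p ≤ q ↔ pq = p`. -/
lemma proj_le_iff {p q : R} (hp : p ∈ S.A) (hpp : p * p = p)
    (hq : q ∈ S.A) (hqq : q * q = q) : S.le p q ↔ p * q = p := by
  constructor
  · intro h
    have h1 : S.le (p * p * p) (p * q * p) :=
      S.quad_le hp hp hq (S.proj_nonneg hp hpp) h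
    rw [hpp, hpp] at h1
    have h2 : S.le (p * q * p) (p * 1 * p) :=
      S.quad_le hp hq S.one_mem (S.proj_nonneg hp hpp) (S.proj_le_one hq hqq)
    rw [mul_one, hpp] at h2
    have h3 : p * q * p = p :=
      S.le_antisymm _ (S.quad_mem p hp q hq) p hp h2 h1
    have h4 : p * (1 - q) * p = 0 := by
      linear_combination (norm := noncomm_ring) hpp - h3
    have h5 := (S.quad_zero p hp (1 - q) (S.A.sub_mem S.one_mem hq)
      (S.proj_nonneg (S.A.sub_mem S.one_mem hq) (one_sub_proj hqq)) h4).1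
    linear_combination (norm := noncomm_ring) -h5
  · intro h
    have h1 : p * (1 - q) = 0 := by rw [mul_sub, mul_one, h, sub_self]
    have h2 := S.swap0 hp (S.A.sub_mem S.one_mem hq) h1
    have hqp : q * p = p := by
      linear_combination (norm := noncomm_ring) -h2
    have h3 : (1 - p) * q * (1 - p) = q - p := by
      linear_combination (norm := noncomm_ring) (h * p - h - hqp + hpp)
    have h4 := S.quad_nn (1 - p) (S.A.sub_mem S.one_mem hp) q hq
      (S.proj_nonneg (S.A.sub_mem S.one_mem hp) (one_sub_proj hpp))
      (S.proj_nonneg hq hqq)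
    rw [h3] at h4
    rwa [S.le_iff_sub hp hq]

lemma proj_mul_of_le {p q : R} (hp : p ∈ S.A) (hpp : p * p = p)
    (hq : q ∈ S.A) (hqq : q * q = q) (h : S.le p q) : p * q = p ∧ q * p = p := by
  have h1 := (S.proj_le_iff hp hpp hq hqq).mp h
  refine ⟨h1, ?_⟩
  have h2 : p * (1 - q) = 0 := by rw [mul_sub, mul_one, h1, sub_self]
  have h3 := S.swap0 hp (S.A.sub_mem S.one_mem hq) h2
  linear_combination (norm := noncomm_ring) -h3

/-- If `xy = 0` and `x + y ≥ 0` then `x ≥ 0`. -/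
lemma orth_nonneg {x y : R} (hx : x ∈ S.A) (hy : y ∈ S.A)
    (hxy : x * y = 0) (hs : S.le 0 (x + y)) : S.le 0 x := by
  have hpmem := S.carr_mem x hx
  have hyp : y * S.carr x = 0 := S.kills_carr hx hy (S.swap0 hx hy hxy)
  have hxp : x * S.carr x = x := S.mul_carr hx
  have hkey : S.carr x * (x + y) * S.carr x = x := by
    have hcx := S.carr_mul hx
    linear_combination (norm := noncomm_ring) hcx * (S.carr x) + hxp + (S.carr x) * hyp
  have := S.quad_nn (S.carr x) hpmem (x + y) (S.A.add_mem hx hy)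
    (S.proj_nonneg hpmem (S.carr_idem x hx)) hs
  rwa [hkey] at this

/-- If `s ≥ 0` and `s²c = 0` then `sc = 0`. -/
lemma sq_kill {s c : R} (hs : s ∈ S.A) (hsn : S.le 0 s) (hc : c ∈ S.A)
    (h : s * s * c = 0) : s * c = 0 := by
  have hssmem := S.sq_mem s hs
  have hpmem := S.carr_mem _ hssmem
  have hpp := S.carr_idem _ hssmem
  have hqmem : (1 : R) - S.carr (s*s) ∈ S.A := S.A.sub_mem S.one_mem hpmem
  have hqq := one_sub_proj hpp
  have hqnn := S.proj_nonneg hqmem hqq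
  have hsq : s * s * (1 - S.carr (s*s)) = 0 := by
    rw [mul_sub, mul_one, S.mul_carr hssmem, sub_self]
  have hqs : (1 - S.carr (s*s)) * (s * s) = 0 := S.swap0 hssmem hqmem hsq
  have hzmem := S.quad_mem _ hqmem s hs
  have hznn := S.quad_nn _ hqmem s hs hqnn hsn
  have hle1 : S.le (s * (1 - S.carr (s*s)) * s) (s * s) := by
    have := S.quad_le hs hqmem S.one_mem hsn (S.proj_le_one hqmem hqq)
    rwa [mul_one] at this
  have hle2 := S.quad_le hqmem (S.quad_mem s hs _ hqmem) hssmem hqnn hle1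
  have hz3 : (1 - S.carr (s*s)) * (s * s) * (1 - S.carr (s*s)) = 0 := by
    rw [hqs, zero_mul]
  rw [hz3] at hle2
  have hzz : ((1 - S.carr (s*s)) * s * (1 - S.carr (s*s))) *
      ((1 - S.carr (s*s)) * s * (1 - S.carr (s*s)))
      = (1 - S.carr (s*s)) * (s * (1 - S.carr (s*s)) * s) * (1 - S.carr (s*s)) := by
    linear_combination (norm := noncomm_ring)
      ((1 - S.carr (s*s)) * s) * hqq * (s * (1 - S.carr (s*s)))
  have hzzle : S.le (((1 - S.carr (s*s)) * s * (1 - S.carr (s*s))) *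
      ((1 - S.carr (s*s)) * s * (1 - S.carr (s*s)))) 0 := by rw [hzz]; exact hle2
  have hzznn := S.sq_nn _ hzmem
  have hzzz := S.le_nn_antisymm (S.sq_mem _ hzmem) hzznn hzzle
  have hz0 := S.eq_zero_of_sq hzmem hzzz
  obtain ⟨-, hsq0⟩ := S.quad_zero _ hqmem s hs hsn hz0
  have hsp : s * S.carr (s*s) = s := by
    linear_combination (norm := noncomm_ring) -hsq0
  have hpc : S.carr (s*s) * c = 0 := S.carr_kills hssmem hc h
  calc s * c = s * S.carr (s*s) * c := by rw [hsp]
    _ = s * (S.carr (s*s) * c) := by rw [mul_assoc]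
    _ = 0 := by rw [hpc, mul_zero]

end SynapticAlgebra

end Aux2
section Aux3

namespace SynapticAlgebra

variable {R : Type*} [Ring R] [Algebra ℝ R] (S : SynapticAlgebra R)

lemma absv_mem {b : R} (hb : b ∈ S.A) : S.sqrt (b*b) ∈ S.A :=
  S.sqrt_mem _ (S.sq_mem b hb) (S.sq_nn b hb)

lemma absv_nn {b : R} (hb : b ∈ S.A) : S.le 0 (S.sqrt (b*b)) :=
  S.sqrt_nn _ (S.sq_mem b hb) (S.sq_nn b hb)

lemma absv_sq {b : R} (hb : b ∈ S.A) : S.sqrt (b*b) * S.sqrt (b*b) = b*b :=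
  S.sqrt_sq _ (S.sq_mem b hb) (S.sq_nn b hb)

lemma absv_comm {b c : R} (hb : b ∈ S.A) (hc : c ∈ S.A) (h : b * c = c * b) :
    S.sqrt (b*b) * c = c * S.sqrt (b*b) := by
  refine S.sqrt_bicomm _ (S.sq_mem b hb) (S.sq_nn b hb) c hc ?_
  linear_combination (norm := noncomm_ring) b * h + h * b

/-- The negative part `b⁻ = (|b| - b)/2`. -/
noncomputable def npart (b : R) : R := (2⁻¹ : ℝ) • (S.sqrt (b*b) - b)

lemma pospart_eq (b : R) : S.pospart b = (2⁻¹ : ℝ) • (S.sqrt (b*b) + b) := rfl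

lemma pospart_mem {b : R} (hb : b ∈ S.A) : S.pospart b ∈ S.A :=
  S.A.smul_mem _ (S.A.add_mem (S.absv_mem hb) hb)

lemma npart_mem {b : R} (hb : b ∈ S.A) : S.npart b ∈ S.A :=
  S.A.smul_mem _ (S.A.sub_mem (S.absv_mem hb) hb)

lemma pospart_sub_npart (b : R) : S.pospart b - S.npart b = b := by
  rw [pospart_eq, npart]; module

lemma pospart_add_npart (b : R) : S.pospart b + S.npart b = S.sqrt (b*b) := by
  rw [pospart_eq, npart]; module

lemma sum_mul_diff {b : R} (hb : b ∈ S.A) :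
    (S.sqrt (b*b) + b) * (S.sqrt (b*b) - b) = 0 := by
  have h1 := S.absv_sq hb
  have h2 := S.absv_comm hb hb rfl
  linear_combination (norm := noncomm_ring) h1 - h2

lemma diff_mul_sum {b : R} (hb : b ∈ S.A) :
    (S.sqrt (b*b) - b) * (S.sqrt (b*b) + b) = 0 := by
  have h1 := S.absv_sq hb
  have h2 := S.absv_comm hb hb rfl
  linear_combination (norm := noncomm_ring) h1 + h2

lemma pospart_mul_npart {b : R} (hb : b ∈ S.A) : S.pospart b * S.npart b = 0 := by
  rw [pospart_eq, npart, smul_mul_assoc, mul_smul_comm, S.sum_mul_diff hb,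
    smul_zero, smul_zero]

lemma npart_mul_pospart {b : R} (hb : b ∈ S.A) : S.npart b * S.pospart b = 0 := by
  rw [pospart_eq, npart, smul_mul_assoc, mul_smul_comm, S.diff_mul_sum hb,
    smul_zero, smul_zero]

lemma sum_nn {b : R} (hb : b ∈ S.A) : S.le 0 (S.sqrt (b*b) + b) := by
  refine S.orth_nonneg (S.A.add_mem (S.absv_mem hb) hb) (S.A.sub_mem (S.absv_mem hb) hb)
    (S.sum_mul_diff hb) ?_
  have : S.sqrt (b*b) + b + (S.sqrt (b*b) - b) = S.sqrt (b*b) + S.sqrt (b*b) := by abel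
  rw [this]
  exact S.add_nn (S.absv_mem hb) (S.absv_mem hb) (S.absv_nn hb) (S.absv_nn hb)

lemma diff_nn {b : R} (hb : b ∈ S.A) : S.le 0 (S.sqrt (b*b) - b) := by
  refine S.orth_nonneg (S.A.sub_mem (S.absv_mem hb) hb) (S.A.add_mem (S.absv_mem hb) hb)
    (S.diff_mul_sum hb) ?_
  have : S.sqrt (b*b) - b + (S.sqrt (b*b) + b) = S.sqrt (b*b) + S.sqrt (b*b) := by abel
  rw [this]
  exact S.add_nn (S.absv_mem hb) (S.absv_mem hb) (S.absv_nn hb) (S.absv_nn hb)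

lemma pospart_nn {b : R} (hb : b ∈ S.A) : S.le 0 (S.pospart b) :=
  S.smul_nonneg _ (by norm_num) _ (S.A.add_mem (S.absv_mem hb) hb) (S.sum_nn hb)

lemma npart_nn {b : R} (hb : b ∈ S.A) : S.le 0 (S.npart b) :=
  S.smul_nonneg _ (by norm_num) _ (S.A.sub_mem (S.absv_mem hb) hb) (S.diff_nn hb)

/-- uniqueness of the carrier projection -/
lemma carr_eq_of_spec {a e : R} (ha : a ∈ S.A) (he : e ∈ S.A) (hee : e * e = e)
    (hspec : ∀ c ∈ S.A, (a * c = 0 ↔ e * c = 0)) : S.carr a = e := by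
  have h1 : a * (1 - e) = 0 :=
    (hspec (1 - e) (S.A.sub_mem S.one_mem he)).mpr (by
      rw [mul_sub, mul_one, hee, sub_self])
  have hce : S.carr a * (1 - e) = 0 :=
    S.carr_kills ha (S.A.sub_mem S.one_mem he) h1
  have h2 : a * (1 - S.carr a) = 0 := by
    rw [mul_sub, mul_one, S.mul_carr ha, sub_self]
  have h3 : e * (1 - S.carr a) = 0 :=
    (hspec (1 - S.carr a) (S.A.sub_mem S.one_mem (S.carr_mem a ha))).mp h2
  have hsq : (S.carr a - e) * (S.carr a - e) = 0 := by
    have hcc := S.carr_idem a ha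
    linear_combination (norm := noncomm_ring) hcc + hee + hce + h3
  have := S.eq_zero_of_sq (S.A.sub_mem (S.carr_mem a ha) he) hsq
  linear_combination (norm := noncomm_ring) this

/-- decomposition of the carrier: `b° = (b⁺)° + (b⁻)°`. -/
lemma carr_decomp {b : R} (hb : b ∈ S.A) :
    S.carr b = S.carr (S.pospart b) + S.carr (S.npart b) := by
  have hPm := S.pospart_mem hb
  have hNm := S.npart_mem hb
  have hcPm := S.carr_mem _ hPm
  have hcNm := S.carr_mem _ hNm
  have hcP := S.carr_idem _ hPm
  have hcN := S.carr_idem _ hNm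
  -- orthogonality of the two carriers
  have o1 : S.carr (S.pospart b) * S.npart b = 0 :=
    S.carr_kills hPm hNm (S.pospart_mul_npart hb)
  have o2 : S.npart b * S.carr (S.pospart b) = 0 := S.swap0 hcPm hNm o1
  have o3 : S.carr (S.npart b) * S.carr (S.pospart b) = 0 :=
    S.carr_kills hNm hcPm o2
  have o4 : S.carr (S.pospart b) * S.carr (S.npart b) = 0 := S.swap0 hcNm hcPm o3
  refine S.carr_eq_of_spec hb (S.A.add_mem hcPm hcNm) ?_ ?_
  · linear_combination (norm := noncomm_ring) hcP + hcN + o3 + o4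
  · intro c hc
    constructor
    · intro h
      have hm2 : S.sqrt (b*b) * S.sqrt (b*b) * c = 0 := by
        rw [S.absv_sq hb, mul_assoc, h, mul_zero]
      have hm : S.sqrt (b*b) * c = 0 :=
        S.sq_kill (S.absv_mem hb) (S.absv_nn hb) hc hm2
      have hP : S.pospart b * c = 0 := by
        rw [pospart_eq, smul_mul_assoc, add_mul, hm, h, add_zero, smul_zero]
      have hN : S.npart b * c = 0 := by
        rw [npart, smul_mul_assoc, sub_mul, hm, h, sub_zero, smul_zero]
      rw [add_mul, S.carr_kills hPm hc hP, S.carr_kills hNm hc hN, add_zero]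
    · intro h
      have e1 : S.carr (S.pospart b) * c = 0 := by
        have : S.carr (S.pospart b) * ((S.carr (S.pospart b) + S.carr (S.npart b)) * c)
            = S.carr (S.pospart b) * c := by
          linear_combination (norm := noncomm_ring) (hcP + o4) * c
        rw [h, mul_zero] at this
        linear_combination (norm := noncomm_ring) -this
      have e2 : S.carr (S.npart b) * c = 0 := by
        have : S.carr (S.npart b) * ((S.carr (S.pospart b) + S.carr (S.npart b)) * c)
            = S.carr (S.npart b) * c := by
          linear_combination (norm := noncomm_ring) (hcN + o3) * c
        rw [h, mul_zero] at this
        linear_combination (norm := noncomm_ring) -this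
      have hP : S.pospart b * c = 0 := (S.carr_spec _ hPm c hc).mpr e1
      have hN : S.npart b * c = 0 := (S.carr_spec _ hNm c hc).mpr e2
      have := S.pospart_sub_npart b
      calc b * c = (S.pospart b - S.npart b) * c := by rw [this]
        _ = 0 := by rw [sub_mul, hP, hN, sub_zero]

/-- commuting product of nonnegative elements is nonnegative -/
lemma mul_nonneg_comm {x y : R} (hx : x ∈ S.A) (hy : y ∈ S.A)
    (hxn : S.le 0 x) (hyn : S.le 0 y) (hcomm : x * y = y * x) :
    x * y ∈ S.A ∧ S.le 0 (x * y) := by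
  have htm := S.sqrt_mem x hx hxn
  have htn := S.sqrt_nn x hx hxn
  have htt := S.sqrt_sq x hx hxn
  have hty : S.sqrt x * y = y * S.sqrt x := S.sqrt_bicomm x hx hxn y hy hcomm
  have hkey : x * y = S.sqrt x * y * S.sqrt x := by
    linear_combination (norm := noncomm_ring) S.sqrt x * hty - htt * y
  rw [hkey]
  exact ⟨S.quad_mem _ htm y hy, S.quad_nn _ htm y hy htn hyn⟩

/-- monotonicity of commuting square roots -/
lemma sqrt_mono {x y : R} (hx : x ∈ S.A) (hy : y ∈ S.A)
    (hxn : S.le 0 x) (hyn : S.le 0 y) (hcomm : x * y = y * x)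
    (hsq : S.le (x * x) (y * y)) : S.le x y := by
  set z := y - x with hzdef
  have hz : z ∈ S.A := S.A.sub_mem hy hx
  have hzx : z * x = x * z := by
    rw [hzdef]; linear_combination (norm := noncomm_ring) -hcomm
  have hzy : z * y = y * z := by
    rw [hzdef]; linear_combination (norm := noncomm_ring) -hcomm
  have hmzx : S.sqrt (z*z) * x = x * S.sqrt (z*z) := S.absv_comm hz hx hzx
  have hmzy : S.sqrt (z*z) * y = y * S.sqrt (z*z) := S.absv_comm hz hy hzy
  have hwm : S.npart z ∈ S.A := S.npart_mem hz
  have hwn : S.le 0 (S.npart z) := S.npart_nn hz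
  have hzw : z * S.npart z = -(S.npart z * S.npart z) := by
    have hPN := S.pospart_mul_npart hz
    have hsub := S.pospart_sub_npart z
    linear_combination (norm := noncomm_ring) hPN - hsub * (S.npart z)
  have hwx : S.npart z * x = x * S.npart z := by
    have h1 : (S.sqrt (z*z) - z) * x = x * (S.sqrt (z*z) - z) := by
      linear_combination (norm := noncomm_ring) hmzx - hzx
    rw [npart, smul_mul_assoc, mul_smul_comm, h1]
  have hwy : S.npart z * y = y * S.npart z := by
    have h1 : (S.sqrt (z*z) - z) * y = y * (S.sqrt (z*z) - z) := by
      linear_combination (norm := noncomm_ring) hmzy - hzy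
    rw [npart, smul_mul_assoc, mul_smul_comm, h1]
  have hwz : S.npart z * z = z * S.npart z := by
    have hmzz : S.sqrt (z*z) * z = z * S.sqrt (z*z) := S.absv_comm hz hz rfl
    have h1 : (S.sqrt (z*z) - z) * z = z * (S.sqrt (z*z) - z) := by
      linear_combination (norm := noncomm_ring) hmzz
    rw [npart, smul_mul_assoc, mul_smul_comm, h1]
  have hwz2 : S.npart z * z = -(S.npart z * S.npart z) := hwz.trans hzw
  have hfac : y * y - x * x = z * (x + y) := by
    rw [hzdef]; linear_combination (norm := noncomm_ring) hcomm
  have h3 : S.le 0 (S.npart z * (y*y - x*x) * S.npart z) := by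
    refine S.quad_nn _ hwm _ (S.A.sub_mem (S.sq_mem y hy) (S.sq_mem x hx)) hwn ?_
    rwa [← S.le_iff_sub (S.sq_mem x hx) (S.sq_mem y hy)]
  have hwxy : S.npart z * (x + y) = (x + y) * S.npart z := by
    rw [mul_add, add_mul, hwx, hwy]
  have h4 : S.npart z * (z * (x+y)) * S.npart z
      = -((x + y) * (S.npart z * S.npart z * S.npart z)) := by
    linear_combination (norm := noncomm_ring)
      hwz2 * ((x+y) * S.npart z) - S.npart z * hwxy * S.npart z - hwxy * (S.npart z * S.npart z)
  rw [hfac, h4] at h3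
  have hw3m : S.npart z * S.npart z * S.npart z ∈ S.A := S.quad_mem _ hwm _ hwm
  have hw3n : S.le 0 (S.npart z * S.npart z * S.npart z) := S.quad_nn _ hwm _ hwm hwn hwn
  have hxw3 : x * (S.npart z * S.npart z * S.npart z)
      = (S.npart z * S.npart z * S.npart z) * x := by
    linear_combination (norm := noncomm_ring)
      -(S.npart z * S.npart z * hwx) - S.npart z * hwx * S.npart z - hwx * (S.npart z * S.npart z)
  have hyw3 : y * (S.npart z * S.npart z * S.npart z)
      = (S.npart z * S.npart z * S.npart z) * y := by
    linear_combination (norm := noncomm_ring)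
      -(S.npart z * S.npart z * hwy) - S.npart z * hwy * S.npart z - hwy * (S.npart z * S.npart z)
  obtain ⟨hum, hun⟩ := S.mul_nonneg_comm hx hw3m hxn hw3n hxw3
  obtain ⟨hvm, hvn⟩ := S.mul_nonneg_comm hy hw3m hyn hw3n hyw3
  have hsum_le : S.le (x * (S.npart z * S.npart z * S.npart z)
      + y * (S.npart z * S.npart z * S.npart z)) 0 := by
    have heq : (x + y) * (S.npart z * S.npart z * S.npart z)
        = x * (S.npart z * S.npart z * S.npart z)
          + y * (S.npart z * S.npart z * S.npart z) := add_mul _ _ _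
    rw [heq] at h3
    rw [S.le_iff_sub (S.A.add_mem hum hvm) S.A.zero_mem]
    simpa using h3
  have huv : S.le (x * (S.npart z * S.npart z * S.npart z))
      (x * (S.npart z * S.npart z * S.npart z) + y * (S.npart z * S.npart z * S.npart z)) := by
    have := S.add_le_add_right 0 S.A.zero_mem _ hvm _ hum hvn
    rw [zero_add, add_comm] at this
    exact this
  have hu0 : x * (S.npart z * S.npart z * S.npart z) = 0 :=
    S.le_nn_antisymm hum hun
      (S.le_tr hum (S.A.add_mem hum hvm) S.A.zero_mem huv hsum_le)
  have hv0 : y * (S.npart z * S.npart z * S.npart z) = 0 := by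
    have h5 := hsum_le
    rw [hu0, zero_add] at h5
    exact S.le_nn_antisymm hvm hvn h5
  have hzw3 : z * (S.npart z * S.npart z * S.npart z) = 0 := by
    rw [hzdef]; rw [hzdef] at hv0 hu0
    linear_combination (norm := noncomm_ring) hv0 - hu0
  have hw4 : (S.npart z * S.npart z) * (S.npart z * S.npart z) = 0 := by
    linear_combination (norm := noncomm_ring) hzw * (S.npart z * S.npart z) - hzw3
  have hww0 := S.eq_zero_of_sq (S.sq_mem _ hwm) hw4
  have hw0 := S.eq_zero_of_sq hwm hww0
  have hzP : z = S.pospart z := by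
    have hs := S.pospart_sub_npart z
    rw [hw0, sub_zero] at hs
    exact hs.symm
  have hzn : S.le 0 z := by rw [hzP]; exact S.pospart_nn hz
  rw [S.le_iff_sub hx hy]
  rw [hzdef] at hzn
  exact hzn

end SynapticAlgebra

end Aux3
section Aux4

namespace SynapticAlgebra

variable {R : Type*} [Ring R] [Algebra ℝ R] (S : SynapticAlgebra R)

lemma sq_expand (u : R) (t : ℝ) :
    (u + t • (1:R)) * (u + t • 1) = u * u + (2*t) • u + (t*t) • (1:R) := by
  simp only [mul_add, add_mul, mul_smul_comm, smul_mul_assoc, smul_smul, mul_one, one_mul]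
  module

lemma npart_shift {c : R} (hc : c ∈ S.A) {t : ℝ} (ht : 0 < t) :
    S.le (S.npart c) (S.npart (c - t • 1)) ∧
    S.le (S.npart (c - t • 1)) (S.npart c + t • (1:R)) := by
  have hb : c - t • 1 ∈ S.A := S.A.sub_mem hc (S.A.smul_mem _ S.one_mem)
  have hbc : (c - t • 1) * c = c * (c - t • 1) := by
    simp [sub_mul, mul_sub, smul_mul_assoc, mul_smul_comm]
  have hmb := S.absv_mem hb
  have hmc := S.absv_mem hc
  have hmbc : S.sqrt ((c - t•1)*(c - t•1)) * c = c * S.sqrt ((c - t•1)*(c - t•1)) :=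
    S.absv_comm hb hc hbc
  have hmcb : S.sqrt (c*c) * (c - t•1) = (c - t•1) * S.sqrt (c*c) :=
    S.absv_comm hc hb hbc.symm
  have hmm : S.sqrt (c*c) * S.sqrt ((c - t•1)*(c - t•1))
      = S.sqrt ((c - t•1)*(c - t•1)) * S.sqrt (c*c) :=
    S.absv_comm hc hmb hmbc.symm
  -- expansion of c*c in terms of b = c - t•1
  have e1 : c * c = (c - t•1) * (c - t•1) + (2*t) • (c - t•1) + (t*t) • (1:R) := by
    have := sq_expand (c - t • (1:R)) t
    rwa [sub_add_cancel] at this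
  constructor
  · -- |c| ≤ |b| + t so c⁻ ≤ b⁻
    have hyn : S.le 0 (S.sqrt ((c - t•1)*(c - t•1)) + t • (1:R)) :=
      S.add_nn hmb (S.A.smul_mem _ S.one_mem) (S.absv_nn hb)
        (S.smul_nonneg t ht.le _ S.one_mem S.zero_le_one')
    have hcomm : S.sqrt (c*c) * (S.sqrt ((c - t•1)*(c - t•1)) + t • (1:R))
        = (S.sqrt ((c - t•1)*(c - t•1)) + t • (1:R)) * S.sqrt (c*c) := by
      rw [mul_add, add_mul, mul_smul_comm, smul_mul_assoc, mul_one, one_mul, hmm]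
    have hkey : (S.sqrt ((c - t•1)*(c - t•1)) + t • (1:R))
          * (S.sqrt ((c - t•1)*(c - t•1)) + t • (1:R))
          - S.sqrt (c*c) * S.sqrt (c*c) = (4*t) • S.npart (c - t•1) := by
      rw [sq_expand, S.absv_sq hb, S.absv_sq hc, npart, e1, smul_smul]
      module
    have hsq : S.le (S.sqrt (c*c) * S.sqrt (c*c))
        ((S.sqrt ((c - t•1)*(c - t•1)) + t • (1:R))
          * (S.sqrt ((c - t•1)*(c - t•1)) + t • (1:R))) := by
      rw [S.le_iff_sub (S.sq_mem _ hmc) (S.sq_mem _ (S.A.add_mem hmb (S.A.smul_mem _ S.one_mem))),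
        hkey]
      exact S.smul_nonneg _ (by linarith) _ (S.npart_mem hb) (S.npart_nn hb)
    have hmono := S.sqrt_mono hmc (S.A.add_mem hmb (S.A.smul_mem _ S.one_mem))
      (S.absv_nn hc) hyn hcomm hsq
    -- now c⁻ ≤ b⁻
    rw [S.le_iff_sub (S.npart_mem hc) (S.npart_mem hb)]
    rw [S.le_iff_sub hmc (S.A.add_mem hmb (S.A.smul_mem _ S.one_mem))] at hmono
    have heq : S.npart (c - t•1) - S.npart c
        = (2⁻¹:ℝ) • (S.sqrt ((c - t•1)*(c - t•1)) + t • (1:R) - S.sqrt (c*c)) := by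
      rw [npart, npart]; module
    rw [heq]
    exact S.smul_nonneg _ (by norm_num) _
      (S.A.sub_mem (S.A.add_mem hmb (S.A.smul_mem _ S.one_mem)) hmc) hmono
  · -- |b| ≤ |c| + t so b⁻ ≤ c⁻ + t
    have hyn : S.le 0 (S.sqrt (c*c) + t • (1:R)) :=
      S.add_nn hmc (S.A.smul_mem _ S.one_mem) (S.absv_nn hc)
        (S.smul_nonneg t ht.le _ S.one_mem S.zero_le_one')
    have hcomm : S.sqrt ((c - t•1)*(c - t•1)) * (S.sqrt (c*c) + t • (1:R))
        = (S.sqrt (c*c) + t • (1:R)) * S.sqrt ((c - t•1)*(c - t•1)) := by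
      rw [mul_add, add_mul, mul_smul_comm, smul_mul_assoc, mul_one, one_mul, hmm]
    have hkey : (S.sqrt (c*c) + t • (1:R)) * (S.sqrt (c*c) + t • (1:R))
          - S.sqrt ((c - t•1)*(c - t•1)) * S.sqrt ((c - t•1)*(c - t•1))
          = (4*t) • S.pospart c := by
      rw [sq_expand, S.absv_sq hb, S.absv_sq hc, pospart_eq, e1, smul_smul]
      module
    have hsq : S.le (S.sqrt ((c - t•1)*(c - t•1)) * S.sqrt ((c - t•1)*(c - t•1)))
        ((S.sqrt (c*c) + t • (1:R)) * (S.sqrt (c*c) + t • (1:R))) := by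
      rw [S.le_iff_sub (S.sq_mem _ hmb) (S.sq_mem _ (S.A.add_mem hmc (S.A.smul_mem _ S.one_mem))),
        hkey]
      exact S.smul_nonneg _ (by linarith) _ (S.pospart_mem hc) (S.pospart_nn hc)
    have hmono := S.sqrt_mono hmb (S.A.add_mem hmc (S.A.smul_mem _ S.one_mem))
      (S.absv_nn hb) hyn hcomm hsq
    rw [S.le_iff_sub (S.npart_mem hb) (S.A.add_mem (S.npart_mem hc) (S.A.smul_mem _ S.one_mem))]
    rw [S.le_iff_sub hmb (S.A.add_mem hmc (S.A.smul_mem _ S.one_mem))] at hmono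
    have heq : S.npart c + t • (1:R) - S.npart (c - t•1)
        = (2⁻¹:ℝ) • (S.sqrt (c*c) + t • (1:R) - S.sqrt ((c - t•1)*(c - t•1))) := by
      rw [npart, npart]; module
    rw [heq]
    exact S.smul_nonneg _ (by norm_num) _
      (S.A.sub_mem (S.A.add_mem hmc (S.A.smul_mem _ S.one_mem)) hmb) hmono

end SynapticAlgebra

end Aux4
section Aux5

namespace SynapticAlgebra

variable {R : Type*} [Ring R] [Algebra ℝ R] (S : SynapticAlgebra R)

lemma alg_mem (r : ℝ) : algebraMap ℝ R r ∈ S.A := by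
  rw [Algebra.algebraMap_eq_smul_one]; exact S.A.smul_mem r S.one_mem

/-- Core upper bound: `1 - ((c)⁺)° ≤ ((c - t)⁻)°` for `t > 0`. -/
lemma core_ub {c : R} (hc : c ∈ S.A) {t : ℝ} (ht : 0 < t) :
    S.le (1 - S.carr (S.pospart c)) (S.carr (S.npart (c - t • 1))) := by
  have hb : c - t • 1 ∈ S.A := S.A.sub_mem hc (S.A.smul_mem _ S.one_mem)
  have hnb := S.npart_mem hb
  have hnc := S.npart_mem hc
  have hq0m := S.carr_mem _ hnb
  have hq0i := S.carr_idem _ hnb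
  have hrm : (1:R) - S.carr (S.npart (c - t•1)) ∈ S.A := S.A.sub_mem S.one_mem hq0m
  have hrr := one_sub_proj hq0i
  have hrn := S.proj_nonneg hrm hrr
  have hbr : S.npart (c - t•1) * (1 - S.carr (S.npart (c - t•1))) = 0 := by
    rw [mul_sub, mul_one, S.mul_carr hnb, sub_self]
  have hrb : (1 - S.carr (S.npart (c - t•1))) * S.npart (c - t•1) = 0 := by
    rw [sub_mul, one_mul, S.carr_mul hnb, sub_self]
  -- step alpha : r c⁻ r = 0
  have hshift := (S.npart_shift hc ht).1
  have ha1 := S.quad_le hrm hnc hnb hrn hshift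
  have ha2 : (1 - S.carr (S.npart (c - t•1))) * S.npart (c - t•1)
      * (1 - S.carr (S.npart (c - t•1))) = 0 := by rw [hrb, zero_mul]
  rw [ha2] at ha1
  have ha3 : (1 - S.carr (S.npart (c - t•1))) * S.npart c
      * (1 - S.carr (S.npart (c - t•1))) = 0 :=
    S.le_nn_antisymm (S.quad_mem _ hrm _ hnc) (S.quad_nn _ hrm _ hnc hrn (S.npart_nn hc)) ha1
  obtain ⟨hrc, hcr⟩ := S.quad_zero _ hrm _ hnc (S.npart_nn hc) ha3
  have hbeta : S.carr (S.npart c) * (1 - S.carr (S.npart (c - t•1))) = 0 :=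
    S.carr_kills hnc hrm hcr
  -- step gamma : (1 - c°) ⟂ r
  have hccm := S.carr_mem c hc
  have hdm : (1:R) - S.carr c ∈ S.A := S.A.sub_mem S.one_mem hccm
  have hcd : c * (1 - S.carr c) = 0 := by
    rw [mul_sub, mul_one, S.mul_carr hc, sub_self]
  have hbd : (c - t•1) * (1 - S.carr c) = -(t • ((1:R) - S.carr c)) := by
    rw [sub_mul, hcd, smul_mul_assoc, one_mul, zero_sub]
  have e1 : c * c = (c - t•1) * (c - t•1) + (2*t) • (c - t•1) + (t*t) • (1:R) := by
    have := sq_expand (c - t • (1:R)) t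
    rwa [sub_add_cancel] at this
  have e2 : (c - t•1) * (c - t•1) = c*c - (2*t) • c + (t*t) • (1:R) := by
    rw [e1]; module
  have hbbd : (c - t•1) * (c - t•1) * (1 - S.carr c) = (t*t) • ((1:R) - S.carr c) := by
    rw [e2, add_mul, sub_mul, mul_assoc, hcd, mul_zero, smul_mul_assoc, hcd,
      smul_zero, smul_mul_assoc, one_mul]
    simp
  have hmbm := S.absv_mem hb
  have hmbn := S.absv_nn hb
  have htt : t * t⁻¹ = 1 := mul_inv_cancel₀ (ne_of_gt ht)
  have hum : t⁻¹ • S.sqrt ((c - t•1)*(c - t•1)) + 1 ∈ S.A :=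
    S.A.add_mem (S.A.smul_mem _ hmbm) S.one_mem
  have hu1 : S.le 1 (t⁻¹ • S.sqrt ((c - t•1)*(c - t•1)) + 1) := by
    rw [S.le_iff_sub S.one_mem hum, add_sub_cancel_right]
    exact S.smul_nonneg _ (by positivity) _ hmbm hmbn
  obtain ⟨v, hvm, huv, hvu⟩ := S.inv_exists _ hum hu1
  have hxu : (S.sqrt ((c - t•1)*(c - t•1)) - t•(1:R))
      * (t⁻¹ • S.sqrt ((c - t•1)*(c - t•1)) + 1)
      = t⁻¹ • (S.sqrt ((c - t•1)*(c - t•1)) * S.sqrt ((c - t•1)*(c - t•1))) - t•(1:R) := by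
    simp only [sub_mul, mul_add, mul_smul_comm, smul_mul_assoc, smul_smul, mul_one,
      one_mul]
    match_scalars <;> field_simp <;> ring
  have hxud : (S.sqrt ((c - t•1)*(c - t•1)) - t•(1:R))
      * (t⁻¹ • S.sqrt ((c - t•1)*(c - t•1)) + 1) * (1 - S.carr c) = 0 := by
    rw [hxu, S.absv_sq hb, sub_mul, smul_mul_assoc, hbbd, smul_smul, smul_mul_assoc,
      one_mul, show t⁻¹*(t*t) = t by field_simp, sub_self]
  have hxv : (S.sqrt ((c - t•1)*(c - t•1)) - t•(1:R)) * v
      = v * (S.sqrt ((c - t•1)*(c - t•1)) - t•(1:R)) := by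
    have hxe : S.sqrt ((c - t•1)*(c - t•1)) - t•(1:R)
        = t • (t⁻¹ • S.sqrt ((c - t•1)*(c - t•1)) + 1) - (2*t) • (1:R) := by
      rw [smul_add, smul_smul, htt, one_smul]; module
    rw [hxe]
    generalize S.sqrt ((c - t•1)*(c - t•1)) = M at huv hvu ⊢
    simp only [sub_mul, mul_sub, smul_mul_assoc, mul_smul_comm, one_mul, mul_one, huv, hvu]
  have hxd : (S.sqrt ((c - t•1)*(c - t•1)) - t•(1:R)) * (1 - S.carr c) = 0 := by
    have e3 : (S.sqrt ((c - t•1)*(c - t•1)) - t•(1:R)) * v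
        * ((t⁻¹ • S.sqrt ((c - t•1)*(c - t•1)) + 1) * (1 - S.carr c))
        = (S.sqrt ((c - t•1)*(c - t•1)) - t•(1:R)) * (1 - S.carr c) := by
      rw [mul_assoc, ← mul_assoc v, hvu, one_mul]
    rw [← e3, hxv, mul_assoc, ← mul_assoc (S.sqrt ((c - t•1)*(c - t•1)) - t•(1:R))
      (t⁻¹ • S.sqrt ((c - t•1)*(c - t•1)) + 1) (1 - S.carr c), hxud, mul_zero]
  have hmd : S.sqrt ((c - t•1)*(c - t•1)) * (1 - S.carr c) = t • ((1:R) - S.carr c) := by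
    rw [sub_mul, smul_mul_assoc, one_mul, sub_eq_zero] at hxd
    exact hxd
  have hnbd : S.npart (c - t•1) * (1 - S.carr c) = t • ((1:R) - S.carr c) := by
    rw [npart, smul_mul_assoc, sub_mul, hmd, hbd]
    module
  have hrd : (1 - S.carr (S.npart (c - t•1))) * (1 - S.carr c) = 0 := by
    have h6 : (1 - S.carr (S.npart (c - t•1))) * (S.npart (c - t•1) * (1 - S.carr c)) = 0 := by
      rw [← mul_assoc, hrb, zero_mul]
    rw [hnbd, mul_smul_comm] at h6
    have h7 := congrArg (fun x : R => t⁻¹ • x) h6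
    simpa [smul_smul, inv_mul_cancel₀ (ne_of_gt ht)] using h7
  -- assemble
  have hppm : S.pospart c ∈ S.A := S.pospart_mem hc
  have hpm : (1:R) - S.carr (S.pospart c) ∈ S.A := S.A.sub_mem S.one_mem (S.carr_mem _ hppm)
  have hppi := one_sub_proj (S.carr_idem _ hppm)
  refine (S.proj_le_iff hpm hppi hq0m hq0i).mpr ?_
  have hkey : (1:R) - S.carr (S.pospart c) = ((1:R) - S.carr c) + S.carr (S.npart c) := by
    have hd := S.carr_decomp hc
    rw [show S.carr (S.pospart c) = S.carr c - S.carr (S.npart c) by rw [hd]; abel]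
    abel
  have hdr : ((1:R) - S.carr c) * (1 - S.carr (S.npart (c - t•1))) = 0 :=
    S.swap0 hrm hdm hrd
  have hpr : ((1:R) - S.carr (S.pospart c)) * (1 - S.carr (S.npart (c - t•1))) = 0 := by
    rw [hkey, add_mul, hdr, hbeta, add_zero]
  rw [mul_sub, mul_one, sub_eq_zero] at hpr
  exact hpr.symm

/-- Core lower bound. -/
lemma core_lb {b : R} (hb : b ∈ S.A) {e : R} (he : e ∈ S.A) (hee : e * e = e)
    (h : ∀ t : ℝ, 0 < t → (1 - e) * S.npart (b + t • 1) = 0) :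
    S.le (S.carr (S.npart b)) e := by
  have hnb := S.npart_mem hb
  have hem : (1:R) - e ∈ S.A := S.A.sub_mem S.one_mem he
  have heei := one_sub_proj hee
  have hen := S.proj_nonneg hem heei
  have hgm : (1 - e) * S.npart b * (1 - e) ∈ S.A := S.quad_mem _ hem _ hnb
  have hg : ∀ t : ℝ, 0 < t → S.le ((1 - e) * S.npart b * (1 - e)) (t • 1) := by
    intro t ht
    have hc : b + t • 1 ∈ S.A := S.A.add_mem hb (S.A.smul_mem _ S.one_mem)
    have hrw : b = (b + t • 1) - t • 1 := by module
    have hshift := (S.npart_shift hc ht).2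
    rw [← hrw] at hshift
    -- g ≤ (1-e)(c⁻ + t)(1-e)
    have h1 := S.quad_le hem hnb (S.A.add_mem (S.npart_mem hc) (S.A.smul_mem _ S.one_mem))
      hen hshift
    have h2 : (1 - e) * (S.npart (b + t•1) + t • (1:R)) * (1 - e)
        = t • ((1:R) - e) := by
      rw [mul_add, add_mul, h t ht, zero_mul, zero_add,
        mul_smul_comm, mul_one, smul_mul_assoc, heei]
    rw [h2] at h1
    have h3 : S.le (t • ((1:R) - e)) (t • (1:R)) :=
      S.smul_le_smul hem S.one_mem ht.le (S.proj_le_one hem heei)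
    exact S.le_tr hgm (S.A.smul_mem _ hem) (S.A.smul_mem _ S.one_mem) h1 h3
  have hg0 := S.le_zero_of_forall hgm hg
  have hgn := S.quad_nn _ hem _ hnb hen (S.npart_nn hb)
  have hgz := S.le_nn_antisymm hgm hgn hg0
  obtain ⟨h8, h9⟩ := S.quad_zero _ hem _ hnb (S.npart_nn hb) hgz
  have h10 : S.npart b * (1 - e) = 0 := h9
  have h11 : S.carr (S.npart b) * (1 - e) = 0 := S.carr_kills hnb hem h10
  rw [mul_sub, mul_one, sub_eq_zero] at h11
  exact (S.proj_le_iff (S.carr_mem _ hnb) (S.carr_idem _ hnb) he hee).mpr h11.symm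

/-- The carrier of the negative part is the supremum of the spectral projections below. -/
lemma isProjSup_npart (a : R) (ha : a ∈ S.A) (ρ : ℝ) :
    S.IsProjSup (S.carr (S.npart (a - algebraMap ℝ R ρ)))
      {x | ∃ μ : ℝ, μ < ρ ∧ x = S.specProj a μ} := by
  have hb : a - algebraMap ℝ R ρ ∈ S.A := S.A.sub_mem ha (S.alg_mem ρ)
  have hnb := S.npart_mem hb
  refine ⟨⟨S.carr_mem _ hnb, S.carr_idem _ hnb⟩, ?_, ?_⟩
  · rintro x ⟨μ, hμ, rfl⟩
    have hc : a - algebraMap ℝ R μ ∈ S.A := S.A.sub_mem ha (S.alg_mem μ)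
    have ht : 0 < ρ - μ := by linarith
    have hrw : a - algebraMap ℝ R ρ = (a - algebraMap ℝ R μ) - (ρ - μ) • 1 := by
      rw [Algebra.algebraMap_eq_smul_one, Algebra.algebraMap_eq_smul_one]; module
    have := S.core_ub hc ht
    rw [← hrw] at this
    exact this
  · rintro r ⟨hrm, hrr⟩ hub
    refine S.core_lb hb hrm hrr ?_
    intro t ht
    have hμ : ρ - t < ρ := by linarith
    have hc : a - algebraMap ℝ R (ρ - t) ∈ S.A := S.A.sub_mem ha (S.alg_mem _)
    have hcrw : a - algebraMap ℝ R ρ + t • 1 = a - algebraMap ℝ R (ρ - t) := by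
      rw [Algebra.algebraMap_eq_smul_one, Algebra.algebraMap_eq_smul_one]; module
    have hp := hub _ ⟨ρ - t, hμ, rfl⟩
    have hpm : S.specProj a (ρ - t) ∈ S.A :=
      S.A.sub_mem S.one_mem (S.carr_mem _ (S.pospart_mem hc))
    have hppi : S.specProj a (ρ - t) * S.specProj a (ρ - t) = S.specProj a (ρ - t) :=
      one_sub_proj (S.carr_idem _ (S.pospart_mem hc))
    obtain ⟨hpe, hep⟩ := S.proj_mul_of_le hpm hppi hrm hrr hp
    have hNcp : S.npart (a - algebraMap ℝ R (ρ - t)) * S.specProj a (ρ - t)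
        = S.npart (a - algebraMap ℝ R (ρ - t)) := by
      have h0 : S.npart (a - algebraMap ℝ R (ρ - t)) * S.carr (S.pospart (a - algebraMap ℝ R (ρ - t))) = 0 :=
        S.kills_carr (S.pospart_mem hc) (S.npart_mem hc) (S.npart_mul_pospart hc)
      show S.npart (a - algebraMap ℝ R (ρ - t)) * (1 - S.carr (S.pospart (a - algebraMap ℝ R (ρ - t)))) = _
      rw [mul_sub, mul_one, h0, sub_zero]
    have hce : S.npart (a - algebraMap ℝ R (ρ - t)) * r
        = S.npart (a - algebraMap ℝ R (ρ - t)) := by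
      calc S.npart (a - algebraMap ℝ R (ρ - t)) * r
          = S.npart (a - algebraMap ℝ R (ρ - t)) * S.specProj a (ρ - t) * r := by rw [hNcp]
        _ = S.npart (a - algebraMap ℝ R (ρ - t)) * (S.specProj a (ρ - t) * r) := by
            rw [mul_assoc]
        _ = S.npart (a - algebraMap ℝ R (ρ - t)) * S.specProj a (ρ - t) := by rw [hpe]
        _ = S.npart (a - algebraMap ℝ R (ρ - t)) := hNcp
    have h1e : S.npart (a - algebraMap ℝ R (ρ - t)) * (1 - r) = 0 := by
      rw [mul_sub, mul_one, hce, sub_self]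
    rw [hcrw]
    exact S.swap0 (S.npart_mem hc) (S.A.sub_mem S.one_mem hrm) h1e

lemma projSup_unique {T : Set R} {q q' : R} (hq : S.IsProjSup q T) (hq' : S.IsProjSup q' T) :
    q = q' := by
  obtain ⟨⟨hqm, hqi⟩, hub, hlub⟩ := hq
  obtain ⟨⟨hqm', hqi'⟩, hub', hlub'⟩ := hq'
  exact S.le_antisymm q hqm q' hqm' (hlub q' ⟨hqm', hqi'⟩ hub') (hlub' q ⟨hqm, hqi⟩ hub)

end SynapticAlgebra

end Aux5
/-- For `a ∈ A` and `λ ∈ ℝ`: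
(i) `p_{−a,λ} = 1 − p_{a,−λ} + d_{a,−λ}`;
(ii) `p_{−a,λ} = 1 − ⋁_{μ<−λ} p_{a,μ}`;
(iii) `p_{1−a,λ} = 1 − ⋁_{μ<1−λ} p_{a,μ}`. -/
theorem specProj_neg {R : Type*} [Ring R] [Algebra ℝ R]
    (S : SynapticAlgebra R) (a : R) (ha : a ∈ S.A) (l : ℝ) :
    (S.specProj (-a) l = 1 - S.specProj a (-l) + S.eigenProj a (-l)) ∧
    (∀ q : R, S.IsProjSup q {x | ∃ μ : ℝ, μ < -l ∧ x = S.specProj a μ} →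
      S.specProj (-a) l = 1 - q) ∧
    (∀ q : R, S.IsProjSup q {x | ∃ μ : ℝ, μ < 1 - l ∧ x = S.specProj a μ} →
      S.specProj (1 - a) l = 1 - q) := by
  have hb : a - algebraMap ℝ R (-l) ∈ S.A := S.A.sub_mem ha (S.alg_mem _)
  have h1 : -a - algebraMap ℝ R l = -(a - algebraMap ℝ R (-l)) := by
    rw [map_neg]; abel
  have h2 : S.pospart (-a - algebraMap ℝ R l) = S.npart (a - algebraMap ℝ R (-l)) := by
    rw [h1, SynapticAlgebra.pospart_eq, SynapticAlgebra.npart, neg_mul_neg,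
      ← sub_eq_add_neg]
  have h3 : S.specProj (-a) l = 1 - S.carr (S.npart (a - algebraMap ℝ R (-l))) := by
    show 1 - S.carr (S.pospart (-a - algebraMap ℝ R l)) = _
    rw [h2]
  refine ⟨?_, ?_, ?_⟩
  · have hd := S.carr_decomp hb
    have h4 : S.specProj a (-l) = 1 - S.carr (S.pospart (a - algebraMap ℝ R (-l))) := rfl
    have h5 : S.eigenProj a (-l) = 1 - S.carr (a - algebraMap ℝ R (-l)) := rfl
    rw [h3, h4, h5, hd]
    abel
  · intro q hq
    have h6 := S.projSup_unique hq (S.isProjSup_npart a ha (-l))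
    rw [h3, h6]
  · intro q hq
    have h1' : 1 - a - algebraMap ℝ R l = -(a - algebraMap ℝ R (1 - l)) := by
      rw [map_sub, map_one]; abel
    have h2' : S.pospart (1 - a - algebraMap ℝ R l)
        = S.npart (a - algebraMap ℝ R (1 - l)) := by
      rw [h1', SynapticAlgebra.pospart_eq, SynapticAlgebra.npart, neg_mul_neg,
        ← sub_eq_add_neg]
    have h3' : S.specProj (1 - a) l = 1 - S.carr (S.npart (a - algebraMap ℝ R (1 - l))) := by
      show 1 - S.carr (S.pospart (1 - a - algebraMap ℝ R l)) = _
      rw [h2']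
    have h6 := S.projSup_unique hq (S.isProjSup_npart a ha (1 - l))
    rw [h3', h6]
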